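/- Assume f : ℝ^p → ℝ is differentiable, μ_f-strongly convex (μ_f > 0) and L_f-smooth, and g : ℝ^p → ℝ ∪ {+∞} is proper, closed, convex. Let 0 < m ≤ L < +∞ satisfy ω := (1/m)·√((L − 2μ_f)m + L_f²) < 1, fix τ_{k+1} ∈ (0,1], ξ⁰ ∈ ∂g(x⁰) for some x⁰ ∈ dom f ∩ dom g, a symmetric matrix H_k with m·I ⪯ H_k ⪯ L·I, and a point xᵏ. If x^{k+1} := prox^{H_k}_{(1/τ_{k+1})g}( xᵏ − H_k^{-1}( ∇f(xᵏ) − (1/τ_{k+1} − 1)ξ⁰ ) ), then ‖x^{k+1} − x*_{τ_{k+1}}‖₂ ≤ ω‖xᵏ − x*_{τ_{k+1}}‖₂. -/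

import Mathlib

open Set Filter Topology
open scoped RealInnerProductSpace

noncomputable section

/-- `ℝ^p` with the Euclidean inner product. -/
abbrev Euc (p : ℕ) := EuclideanSpace ℝ (Fin p)

/-- The weighted (local) norm `‖u‖_H := √⟪H u, u⟫` induced by an operator `H`. -/
noncomputable def wnorm {p : ℕ} (H : Euc p →L[ℝ] Euc p) (u : Euc p) : ℝ :=
  Real.sqrt ⟪H u, u⟫

/-- `v` is a subgradient at `y` of the proper convex function equal to `g` on its
effective domain `S` (and `+∞` outside). -/
def IsSubgradient {p : ℕ} (g : Euc p → ℝ) (S : Set (Euc p)) (v y : Euc p) : Prop :=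
  y ∈ S ∧ ∀ z ∈ S, g y + ⟪v, z - y⟫ ≤ g z

/-- Closedness of the extended-real-valued function equal to `g` on `S` and `+∞`
outside, expressed as closedness of its epigraph. -/
def ClosedOn {p : ℕ} (g : Euc p → ℝ) (S : Set (Euc p)) : Prop :=
  IsClosed {q : Euc p × ℝ | q.1 ∈ S ∧ g q.1 ≤ q.2}

lemma dir_deriv {p : ℕ} {f : Euc p → ℝ} {v x : Euc p} (h : HasGradientAt f v x) (w : Euc p) :
    Tendsto (fun t : ℝ => t⁻¹ * (f (x + t • w) - f x)) (𝓝[>] 0) (𝓝 ⟪v, w⟫) := by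
  have hc : HasDerivAt (fun t : ℝ => x + t • w) w 0 := by
    simpa using ((hasDerivAt_id (0 : ℝ)).smul_const w).const_add x
  have hd : HasDerivAt (fun t : ℝ => f (x + t • w)) ⟪v, w⟫ 0 := by
    have := HasFDerivAt.comp_hasDerivAt (0:ℝ)
      (by simpa using h.hasFDerivAt :
        HasFDerivAt f ((InnerProductSpace.toDual ℝ (Euc p)) v) (x + (0:ℝ) • w)) hc
    simpa [Function.comp_def] using this
  have := hd.tendsto_slope_zero_right
  simpa using this

lemma strong_first_order {p : ℕ} {f : Euc p → ℝ} {f' : Euc p → Euc p} {μ : ℝ}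
    (hf_grad : ∀ z, HasGradientAt f (f' z) z)
    (hf : StrongConvexOn univ μ f) (x y : Euc p) :
    f x + ⟪f' x, y - x⟫ + μ / 2 * ‖y - x‖ ^ 2 ≤ f y := by
  have hlim := dir_deriv (hf_grad x) (y - x)
  have hcont : Continuous fun t : ℝ => f y - f x - (1 - t) * (μ / 2 * ‖y - x‖ ^ 2) := by
    continuity
  have hR : Tendsto (fun t : ℝ => f y - f x - (1 - t) * (μ / 2 * ‖y - x‖ ^ 2)) (𝓝[>] 0)
      (𝓝 (f y - f x - (1 - 0) * (μ / 2 * ‖y - x‖ ^ 2))) :=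
    Tendsto.mono_left (hcont.tendsto 0) nhdsWithin_le_nhds
  have hev : ∀ᶠ t in 𝓝[>] (0:ℝ),
      t⁻¹ * (f (x + t • (y - x)) - f x) ≤ f y - f x - (1 - t) * (μ / 2 * ‖y - x‖ ^ 2) := by
    filter_upwards [Ioc_mem_nhdsGT_of_mem (show (0:ℝ) ∈ Ico (0:ℝ) 1 by simp)] with t ht
    have h2 : f (t • y + (1 - t) • x) ≤ t * f y + (1 - t) * f x
        - t * (1 - t) * (μ / 2 * ‖y - x‖ ^ 2) :=
      hf.2 (mem_univ y) (mem_univ x) ht.1.le (by linarith [ht.2] : (0:ℝ) ≤ 1 - t) (by ring)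
    have hxy : t • y + (1 - t) • x = x + t • (y - x) := by module
    rw [hxy] at h2
    rw [inv_mul_le_iff₀ ht.1]
    nlinarith [h2]
  have := le_of_tendsto_of_tendsto hlim hR hev
  simp only [one_mul, sub_zero] at this
  linarith [this]

lemma grad_strong_mono {p : ℕ} {f : Euc p → ℝ} {f' : Euc p → Euc p} {μ : ℝ}
    (hf_grad : ∀ z, HasGradientAt f (f' z) z)
    (hf : StrongConvexOn univ μ f) (x y : Euc p) :
    μ * ‖x - y‖ ^ 2 ≤ ⟪f' x - f' y, x - y⟫ := by
  have h1 := strong_first_order hf_grad hf x y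
  have h2 := strong_first_order hf_grad hf y x
  have e1 : ⟪f' x - f' y, x - y⟫ = ⟪f' x, x - y⟫ - ⟪f' y, x - y⟫ := inner_sub_left _ _ _
  have e2 : ⟪f' x, y - x⟫ = -⟪f' x, x - y⟫ := by
    rw [show y - x = -(x - y) by abel, inner_neg_right]
  have e3 : ‖y - x‖ = ‖x - y‖ := norm_sub_rev _ _
  rw [e3, e2] at h1
  linarith [h1, h2]

lemma pos_of_linear {A C : ℝ} (h : ∀ t : ℝ, t ∈ Ioc (0:ℝ) 1 → 0 ≤ A + t * C) : 0 ≤ A := by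
  have hcont : Continuous fun t : ℝ => A + t * C := by continuity
  have hR : Tendsto (fun t : ℝ => A + t * C) (𝓝[>] 0) (𝓝 (A + 0 * C)) :=
    Tendsto.mono_left (hcont.tendsto 0) nhdsWithin_le_nhds
  have h0 : (0:ℝ) ≤ A + 0 * C := ge_of_tendsto hR (by
    filter_upwards [Ioc_mem_nhdsGT_of_mem (show (0:ℝ) ∈ Ico (0:ℝ) 1 by simp)] with t ht
    exact h t ht)
  linarith


set_option maxHeartbeats 1000000 in
/-- Lemma: one-step contraction of the scaled proximal step towards
the parametric solution `x*_{τ_{k+1}}`. -/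
theorem stmt_3 {p : ℕ}
    (f g : Euc p → ℝ) (Dg : Set (Euc p))
    (f' : Euc p → Euc p)
    (μf Lf m L ω τ1 : ℝ)
    (x0 ξ0 xk xk1 xsol : Euc p)
    (H Hinv : Euc p →L[ℝ] Euc p)
    -- `f` is differentiable, `μf`-strongly convex and `Lf`-smooth
    (hf_grad : ∀ z, HasGradientAt f (f' z) z)
    (hμf : 0 < μf)
    (hf_strong : StrongConvexOn univ μf f)
    (hf_smooth : ∀ z w : Euc p, ‖f' z - f' w‖ ≤ Lf * ‖z - w‖)
    -- `g` is proper, closed, convex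
    (hg_proper : Dg.Nonempty)
    (hg_convex : ConvexOn ℝ Dg g)
    (hg_closed : ClosedOn g Dg)
    -- parameters and contraction factor
    (hm : 0 < m) (hmL : m ≤ L)
    (hω : ω = (1 / m) * Real.sqrt ((L - 2 * μf) * m + Lf ^ 2))
    (hω1 : ω < 1)
    (hτ1 : τ1 ∈ Ioc (0 : ℝ) 1)
    (hx0 : x0 ∈ Dg)
    (hξ0 : IsSubgradient g Dg ξ0 x0)
    -- the metric: symmetric, `m·I ⪯ H ⪯ L·I`, with inverse `Hinv`
    (hH_symm : ∀ u v : Euc p, ⟪H u, v⟫ = ⟪u, H v⟫)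
    (hH_bounds : ∀ u : Euc p, m * ‖u‖ ^ 2 ≤ ⟪H u, u⟫ ∧ ⟪H u, u⟫ ≤ L * ‖u‖ ^ 2)
    (hHinv : ∀ u : Euc p, H (Hinv u) = u ∧ Hinv (H u) = u)
    -- `x^{k+1} = prox^{H}_{(1/τ1)g}(x^k - H⁻¹(∇f(x^k) - (1/τ1 - 1)ξ⁰))`
    (hxk1 : xk1 ∈ Dg ∧
      ∀ u ∈ Dg,
        (1 / τ1) * g xk1 + (1 / 2) *
            ⟪H (xk1 - (xk - Hinv (f' xk - (1 / τ1 - 1) • ξ0))),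
              xk1 - (xk - Hinv (f' xk - (1 / τ1 - 1) • ξ0))⟫
          ≤ (1 / τ1) * g u + (1 / 2) *
            ⟪H (u - (xk - Hinv (f' xk - (1 / τ1 - 1) • ξ0))),
              u - (xk - Hinv (f' xk - (1 / τ1 - 1) • ξ0))⟫)
    -- `xsol` solves the parametric optimality condition at `τ1`
    (hxsol : IsSubgradient g Dg ((1 - τ1) • ξ0 - τ1 • f' xsol) xsol) :
    ‖xk1 - xsol‖ ≤ ω * ‖xk - xsol‖ := by
  obtain ⟨hτpos, hτle⟩ := hτ1
  have hτne : τ1 ≠ 0 := ne_of_gt hτpos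
  set d := xk - Hinv (f' xk - (1 / τ1 - 1) • ξ0) with hd
  have hsymm' : ∀ u v : Euc p, ⟪H u, v⟫ = ⟪H v, u⟫ := fun u v => by
    rw [hH_symm, real_inner_comm]
  have hpos : ∀ u : Euc p, (0:ℝ) ≤ ⟪H u, u⟫ := fun u =>
    le_trans (by positivity) (hH_bounds u).1
  have hexp : ∀ v u : Euc p, ∀ t : ℝ,
      ⟪H (v + t • u), v + t • u⟫ = ⟪H v, v⟫ + 2*t*⟪H v, u⟫ + t^2 * ⟪H u, u⟫ := by
    intro v u t
    rw [map_add, map_smul]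
    simp only [inner_add_left, inner_add_right, real_inner_smul_left, real_inner_smul_right]
    rw [hsymm' u v]
    ring
  have hconv : Convex ℝ Dg := hg_convex.1
  -- Step 1: subgradient inequality from the prox minimality, towards xsol
  have hA : 0 ≤ ((1/τ1) * (g xsol - g xk1) + ⟪H (xk1 - d), xsol - xk1⟫) := by
    apply pos_of_linear (C := (1/2) * ⟪H (xsol - xk1), xsol - xk1⟫)
    intro t ht
    have hxt_eq : (1 - t) • xk1 + t • xsol = xk1 + t • (xsol - xk1) := by module
    have hxt : xk1 + t • (xsol - xk1) ∈ Dg := by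
      rw [← hxt_eq]
      exact hconv hxk1.1 hxsol.1 (by linarith [ht.2]) ht.1.le (by ring)
    have hg2 : g (xk1 + t • (xsol - xk1)) ≤ (1 - t) * g xk1 + t * g xsol := by
      have := hg_convex.2 hxk1.1 hxsol.1 (show (0:ℝ) ≤ 1 - t by linarith [ht.2]) ht.1.le
        (by ring)
      rw [hxt_eq] at this
      simpa using this
    have hmin := hxk1.2 _ hxt
    have hquad : (xk1 + t • (xsol - xk1)) - d = (xk1 - d) + t • (xsol - xk1) := by abel
    rw [hquad, hexp (xk1 - d) (xsol - xk1) t] at hmin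
    have hσ : (0:ℝ) < 1/τ1 := by positivity
    have key : 0 ≤ t * (((1/τ1) * (g xsol - g xk1) + ⟪H (xk1 - d), xsol - xk1⟫)
        + t * ((1/2) * ⟪H (xsol - xk1), xsol - xk1⟫)) := by
      nlinarith [hmin, mul_le_mul_of_nonneg_left hg2 hσ.le, ht.1]
    have := div_nonneg key ht.1.le
    rwa [mul_div_cancel_left₀ _ (ne_of_gt ht.1)] at this
  -- Step 2: subgradient inequality at xsol
  have hsol2 := hxsol.2 xk1 hxk1.1
  -- H(xk1 - d)
  have hHd : H (xk1 - d) = H (xk1 - xk) + (f' xk - (1 / τ1 - 1) • ξ0) := by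
    have h1 : xk1 - d = (xk1 - xk) + Hinv (f' xk - (1 / τ1 - 1) • ξ0) := by
      rw [hd]; abel
    rw [h1, map_add, (hHinv _).1]
  -- Step 3: key inequality ⟪He,e⟫ ≤ ⟪He0 - Δ, e⟫
  have hA' : 0 ≤ (g xsol - g xk1) + τ1 * ⟪H (xk1 - d), xsol - xk1⟫ := by
    have h := mul_nonneg hτpos.le hA
    have heq : τ1 * ((1/τ1) * (g xsol - g xk1) + ⟪H (xk1 - d), xsol - xk1⟫)
        = (g xsol - g xk1) + τ1 * ⟪H (xk1 - d), xsol - xk1⟫ := by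
      have hcc : τ1 * (1/τ1) = 1 := by field_simp
      linear_combination (g xsol - g xk1) * hcc
    rwa [heq] at h
  have hcomb : 0 ≤ τ1 * ⟪H (xk1 - d), xsol - xk1⟫
      - ⟪(1 - τ1) • ξ0 - τ1 • f' xsol, xk1 - xsol⟫ := by linarith [hA', hsol2]
  have hid : τ1 * ⟪H (xk1 - d), xsol - xk1⟫ - ⟪(1 - τ1) • ξ0 - τ1 • f' xsol, xk1 - xsol⟫
      = τ1 * (⟪H (xk - xsol) - (f' xk - f' xsol), xk1 - xsol⟫
        - ⟪H (xk1 - xsol), xk1 - xsol⟫) := by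
    have hc : τ1 * (1/τ1 - 1) = 1 - τ1 := by
      rw [mul_sub, mul_one_div, div_self hτne, mul_one]
    rw [hHd]
    simp only [map_sub, inner_add_left, inner_sub_left, inner_sub_right,
      real_inner_smul_left]
    linear_combination (⟪ξ0, xsol⟫ - ⟪ξ0, xk1⟫) * hc
      + (2*⟪ξ0, xk1⟫ - 2*⟪ξ0, xsol⟫) * mul_inv_cancel₀ hτne
  have hkey : ⟪H (xk1 - xsol), xk1 - xsol⟫
      ≤ ⟪H (xk - xsol) - (f' xk - f' xsol), xk1 - xsol⟫ := by
    rw [hid] at hcomb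
    by_contra hc
    push_neg at hc
    nlinarith [hcomb, hτpos, hc]
  -- Step 4: Cauchy-Schwarz for the H-form
  have hCS : ∀ a b : Euc p, ⟪H a, b⟫^2 ≤ ⟪H a, a⟫ * ⟪H b, b⟫ := by
    intro a b
    have hq : ∀ t : ℝ, 0 ≤ ⟪H b, b⟫ * (t * t) + (2 * ⟪H a, b⟫) * t + ⟪H a, a⟫ := by
      intro t
      have h0 := hpos (a + t • b)
      rw [hexp a b t] at h0
      nlinarith [h0]
    have hdisc := discrim_le_zero hq
    rw [discrim] at hdisc
    nlinarith [hdisc]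
  set w := Hinv (f' xk - f' xsol) with hwdef
  have hHw : H w = f' xk - f' xsol := (hHinv _).1
  set a := (xk - xsol) - w with hadef
  have hHa : H a = H (xk - xsol) - (f' xk - f' xsol) := by
    rw [hadef, map_sub, hHw]
  have hQe : ⟪H (xk1 - xsol), xk1 - xsol⟫ ≤ ⟪H a, xk1 - xsol⟫ := by
    rw [hHa]; exact hkey
  have hmain : ⟪H (xk1 - xsol), xk1 - xsol⟫ ≤ ⟪H a, a⟫ := by
    rcases eq_or_lt_of_le (hpos (xk1 - xsol)) with h0 | h0
    · rw [← h0]; exact hpos a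
    · have hsq : ⟪H (xk1 - xsol), xk1 - xsol⟫ * ⟪H (xk1 - xsol), xk1 - xsol⟫
          ≤ ⟪H a, xk1 - xsol⟫ * ⟪H a, xk1 - xsol⟫ :=
        mul_le_mul hQe hQe (hpos _) (le_trans (hpos _) hQe)
      nlinarith [hsq, hCS a (xk1 - xsol), h0]
  -- Step 5: bound ⟪Ha, a⟫
  have hΔ : ‖f' xk - f' xsol‖ ≤ Lf * ‖xk - xsol‖ := hf_smooth xk xsol
  have hmono : μf * ‖xk - xsol‖^2 ≤ ⟪f' xk - f' xsol, xk - xsol⟫ :=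
    grad_strong_mono hf_grad hf_strong xk xsol
  have hw : m * ⟪H w, w⟫ ≤ ‖f' xk - f' xsol‖^2 := by
    have h1 : ⟪H w, w⟫ = ⟪f' xk - f' xsol, w⟫ := by rw [hHw]
    have h2 : ⟪f' xk - f' xsol, w⟫ ≤ ‖f' xk - f' xsol‖ * ‖w‖ := real_inner_le_norm _ _
    have h3 : m * ‖w‖^2 ≤ ⟪H w, w⟫ := (hH_bounds w).1
    nlinarith [h1, mul_le_mul_of_nonneg_left h2 hm.le, mul_le_mul_of_nonneg_left h3 hm.le,
      sq_nonneg (m * ‖w‖ - ‖f' xk - f' xsol‖)]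
  have hHaa : ⟪H a, a⟫ = ⟪H (xk - xsol), xk - xsol⟫
      - 2 * ⟪f' xk - f' xsol, xk - xsol⟫ + ⟪H w, w⟫ := by
    have ha' : a = (xk - xsol) + (-1 : ℝ) • w := by rw [hadef]; module
    rw [ha', hexp (xk - xsol) w (-1)]
    have h4 : ⟪H (xk - xsol), w⟫ = ⟪f' xk - f' xsol, xk - xsol⟫ := by
      rw [hH_symm, hHw]
      exact real_inner_comm _ _
    rw [h4]; ring
  have hΔ2 : ‖f' xk - f' xsol‖^2 ≤ Lf^2 * ‖xk - xsol‖^2 := by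
    nlinarith [hΔ, norm_nonneg (f' xk - f' xsol), norm_nonneg (xk - xsol)]
  have hbound_a : m * ⟪H a, a⟫ ≤ ((L - 2*μf)*m + Lf^2) * ‖xk - xsol‖^2 := by
    have h1 : ⟪H (xk - xsol), xk - xsol⟫ ≤ L * ‖xk - xsol‖^2 := (hH_bounds _).2
    nlinarith [hHaa, mul_le_mul_of_nonneg_left h1 hm.le,
      mul_le_mul_of_nonneg_left hmono hm.le, hw, hΔ2]
  -- Step 6: conclude
  have hfin : m^2 * ‖xk1 - xsol‖^2 ≤ ((L - 2*μf)*m + Lf^2) * ‖xk - xsol‖^2 := by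
    have h1 : m * ‖xk1 - xsol‖^2 ≤ ⟪H (xk1 - xsol), xk1 - xsol⟫ := (hH_bounds _).1
    nlinarith [mul_le_mul_of_nonneg_left h1 hm.le, mul_le_mul_of_nonneg_left hmain hm.le,
      hbound_a]
  set X := (L - 2*μf)*m + Lf^2 with hX
  have hsqX : X * ‖xk - xsol‖^2 ≤ (Real.sqrt X)^2 * ‖xk - xsol‖^2 := by
    rcases le_or_gt 0 X with hX0 | hX0
    · rw [Real.sq_sqrt hX0]
    · have hs0 : Real.sqrt X = 0 := Real.sqrt_eq_zero'.2 (by linarith)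
      rw [hs0]
      nlinarith [sq_nonneg ‖xk - xsol‖, hX0]
  have hmω : m * ω = Real.sqrt X := by
    rw [hω]; field_simp
  have hωnn : 0 ≤ ω := by rw [hω]; positivity
  have hsq2 : (m * ‖xk1 - xsol‖)^2 ≤ (m * (ω * ‖xk - xsol‖))^2 := by
    have : (m * (ω * ‖xk - xsol‖))^2 = (Real.sqrt X)^2 * ‖xk - xsol‖^2 := by
      rw [← hmω]; ring
    rw [this]
    calc (m * ‖xk1 - xsol‖)^2 = m^2 * ‖xk1 - xsol‖^2 := by ring
    _ ≤ X * ‖xk - xsol‖^2 := hfin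
    _ ≤ (Real.sqrt X)^2 * ‖xk - xsol‖^2 := hsqX
  have h2 : m * ‖xk1 - xsol‖ ≤ m * (ω * ‖xk - xsol‖) :=
    le_of_pow_le_pow_left₀ (by norm_num) (by positivity) hsq2
  exact le_of_mul_le_mul_left h2 hm


end
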